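/- Let k, d integers with k > d ≥ 1 and n > 2k. Set a₁ = -(d/(n-k))·C(n-k,k), a₀ = ((n-d)/(n-k))·C(n-k,k), b₀ = C(k,d)·C(n-d,d)·C(n-d,k-d), b₁ = -C(k-1,d-1)·C(n-d-1,d-1)·C(n-d-1,k-d). Then b₀ - a₀·b₁/a₁ = (n·(k-d)/(k·(n-d)))·b₀. -/

import Mathlib

lemma aux_stmt18 (A B Cc A' B' C' D nr kr dr : ℝ) (hk : kr ≠ 0) (hd : dr ≠ 0)
    (hnk : nr - kr ≠ 0) (hnd : nr - dr ≠ 0) (hD : D ≠ 0)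
    (h1 : kr * A' = A * dr) (h2 : (nr - dr) * B' = B * dr)
    (h3 : (nr - dr) * C' = Cc * (nr - kr)) :
    A * B * Cc - ((nr - dr) / (nr - kr) * D) * (-(A' * B' * C')) /
      (-(dr / (nr - kr)) * D) = nr * (kr - dr) / (kr * (nr - dr)) * (A * B * Cc) := by
  have hbig : kr * (nr - dr)^2 * (A' * B' * C') = A * B * Cc * dr^2 * (nr - kr) := by
    linear_combination ((nr-dr)*B'*(nr-dr)*C')*h1 + A*dr*(nr-dr)*C'*h2 + A*dr*B*dr*h3
  field_simp
  linear_combination (-1 : ℝ) * hbig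

theorem stmt_18 (n k d : ℕ) (hd : 1 ≤ d) (hdk : d < k) (hn : 2 * k < n) :
    (Nat.choose k d : ℝ) * (Nat.choose (n - d) d : ℝ) * (Nat.choose (n - d) (k - d) : ℝ) -
        ((((n : ℝ) - d) / ((n : ℝ) - k)) * (Nat.choose (n - k) k : ℝ)) *
          (-((Nat.choose (k - 1) (d - 1) : ℝ) * (Nat.choose (n - d - 1) (d - 1) : ℝ) *
              (Nat.choose (n - d - 1) (k - d) : ℝ))) /
          (-(((d : ℝ)) / ((n : ℝ) - k)) * (Nat.choose (n - k) k : ℝ)) =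
      ((n : ℝ) * ((k : ℝ) - d) / ((k : ℝ) * ((n : ℝ) - d))) *
        ((Nat.choose k d : ℝ) * (Nat.choose (n - d) d : ℝ) * (Nat.choose (n - d) (k - d) : ℝ)) := by
  have hdn : d ≤ n := by omega
  have hkn : k ≤ n := by omega
  have h1 : k * Nat.choose (k - 1) (d - 1) = Nat.choose k d * d := by
    have := Nat.add_one_mul_choose_eq (k - 1) (d - 1)
    rw [Nat.sub_add_cancel (by omega : 1 ≤ k), Nat.sub_add_cancel (by omega : 1 ≤ d)] at this
    exact this
  have h2 : (n - d) * Nat.choose (n - d - 1) (d - 1) = Nat.choose (n - d) d * d := by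
    have := Nat.add_one_mul_choose_eq (n - d - 1) (d - 1)
    rw [Nat.sub_add_cancel (by omega : 1 ≤ n - d), Nat.sub_add_cancel (by omega : 1 ≤ d)] at this
    exact this
  have h3 : (n - d) * Nat.choose (n - d - 1) (k - d) = Nat.choose (n - d) (k - d) * (n - k) := by
    have hsym : Nat.choose (n - d - 1) (k - d) = Nat.choose (n - d - 1) (n - k - 1) := by
      rw [← Nat.choose_symm (by omega : k - d ≤ n - d - 1)]
      congr 1; omega
    have hmt := Nat.add_one_mul_choose_eq (n - d - 1) (n - k - 1)
    rw [Nat.sub_add_cancel (by omega : 1 ≤ n - d), Nat.sub_add_cancel (by omega : 1 ≤ n - k)]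
      at hmt
    have hsym2 : Nat.choose (n - d) (n - k) = Nat.choose (n - d) (k - d) := by
      rw [← Nat.choose_symm (by omega : k - d ≤ n - d)]
      congr 1; omega
    rw [hsym, hmt, hsym2]
  have h1r : (k : ℝ) * (Nat.choose (k - 1) (d - 1) : ℝ) = (Nat.choose k d : ℝ) * d := by
    exact_mod_cast h1
  have h2r : ((n : ℝ) - d) * (Nat.choose (n - d - 1) (d - 1) : ℝ)
      = (Nat.choose (n - d) d : ℝ) * d := by
    have := congrArg (Nat.cast : ℕ → ℝ) h2
    push_cast [Nat.cast_sub hdn] at this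
    exact this
  have h3r : ((n : ℝ) - d) * (Nat.choose (n - d - 1) (k - d) : ℝ)
      = (Nat.choose (n - d) (k - d) : ℝ) * ((n : ℝ) - k) := by
    have := congrArg (Nat.cast : ℕ → ℝ) h3
    push_cast [Nat.cast_sub hdn, Nat.cast_sub hkn] at this
    exact this
  have hD : (Nat.choose (n - k) k : ℝ) ≠ 0 := by
    exact_mod_cast (Nat.choose_pos (by omega : k ≤ n - k)).ne'
  have hkr : (k : ℝ) ≠ 0 := Nat.cast_ne_zero.mpr (by omega)
  have hdr : (d : ℝ) ≠ 0 := Nat.cast_ne_zero.mpr (by omega)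
  have hnk : (n : ℝ) - k ≠ 0 := by
    have : (k : ℝ) < n := by exact_mod_cast (by omega : k < n)
    linarith
  have hnd : (n : ℝ) - d ≠ 0 := by
    have : (d : ℝ) < n := by exact_mod_cast (by omega : d < n)
    linarith
  exact aux_stmt18 _ _ _ _ _ _ _ _ _ _ hkr hdr hnk hnd hD h1r h2r h3r
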